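/- Let H be a cocommutative weak Hopf algebra and (B,φ_B) a left weak H-module algebra such that φ_B is φ_B-invertible. Then for each n ≥ 1, the iterated action φ_B^{⊗n} = φ_B∘(H⊗φ_B^{⊗(n-1)}) is φ_B^{⊗n}-invertible, i.e., there exists φ_B^{⊗n†} : H^{⊗n}⊗B → B with φ_B^{⊗n} ∧ φ_B^{⊗n†} = μ_B∘(u_n⊗B). -/

import Mathlib

open TensorProduct LinearMap

noncomputable section

namespace WK

/-- A weak bialgebra structure on a `k`-module `H`. -/
structure WeakBialgebraStr (k : Type) [CommRing k] (H : Type) [AddCommGroup H] [Module k H] :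
    Type where
  mu : H ⊗[k] H →ₗ[k] H
  one : H
  delta : H →ₗ[k] H ⊗[k] H
  eps : H →ₗ[k] k
  mul_assoc' : ∀ x y z : H, mu (mu (x ⊗ₜ[k] y) ⊗ₜ[k] z) = mu (x ⊗ₜ[k] mu (y ⊗ₜ[k] z))
  one_mul' : ∀ x : H, mu (one ⊗ₜ[k] x) = x
  mul_one' : ∀ x : H, mu (x ⊗ₜ[k] one) = x
  coassoc : ∀ x : H, rTensor H delta (delta x)
      = (TensorProduct.assoc k H H H).symm (lTensor H delta (delta x))
  counit_l : ∀ x : H, TensorProduct.lid k H (rTensor H eps (delta x)) = x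
  counit_r : ∀ x : H, TensorProduct.rid k H (lTensor H eps (delta x)) = x
  a1 : ∀ x y : H, delta (mu (x ⊗ₜ[k] y))
      = TensorProduct.map mu mu (tensorTensorTensorComm k H H H H (delta x ⊗ₜ[k] delta y))
  a2 : ∀ x y z : H, eps (mu (mu (x ⊗ₜ[k] y) ⊗ₜ[k] z))
      = LinearMap.mul' k k (TensorProduct.map (eps ∘ₗ mu)
          ((eps ∘ₗ mu) ∘ₗ (TensorProduct.comm k H H).toLinearMap)
          (tensorTensorTensorComm k H H H H ((x ⊗ₜ[k] z) ⊗ₜ[k] delta y)))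
  a2' : ∀ x y z : H, eps (mu (mu (x ⊗ₜ[k] y) ⊗ₜ[k] z))
      = LinearMap.mul' k k (TensorProduct.map (eps ∘ₗ mu)
          ((eps ∘ₗ mu) ∘ₗ (TensorProduct.comm k H H).toLinearMap)
          (tensorTensorTensorComm k H H H H
            ((x ⊗ₜ[k] z) ⊗ₜ[k] (TensorProduct.comm k H H (delta y)))))
  a3 : rTensor H delta (delta one)
      = rTensor H (lTensor H mu ∘ₗ (TensorProduct.assoc k H H H).toLinearMap)
          ((TensorProduct.assoc k (H ⊗[k] H) H H).symm (delta one ⊗ₜ[k] delta one))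
  a3' : rTensor H delta (delta one)
      = rTensor H (lTensor H (mu ∘ₗ (TensorProduct.comm k H H).toLinearMap)
            ∘ₗ (TensorProduct.assoc k H H H).toLinearMap)
          ((TensorProduct.assoc k (H ⊗[k] H) H H).symm (delta one ⊗ₜ[k] delta one))

variable {k : Type} [CommRing k] {H : Type} [AddCommGroup H] [Module k H]

namespace WeakBialgebraStr

variable (W : WeakBialgebraStr k H)

/-- `ε ∘ μ`. -/
def epsmu : H ⊗[k] H →ₗ[k] k := W.eps ∘ₗ W.mu

/-- The target map `Π^L`, `Π^L(h) = ε(1₍₁₎ h) 1₍₂₎`. -/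
def piL : H →ₗ[k] H :=
  (TensorProduct.lid k H).toLinearMap ∘ₗ rTensor H W.epsmu
    ∘ₗ (TensorProduct.assoc k H H H).symm.toLinearMap
    ∘ₗ lTensor H (TensorProduct.comm k H H).toLinearMap
    ∘ₗ (TensorProduct.assoc k H H H).toLinearMap
    ∘ₗ TensorProduct.mk k (H ⊗[k] H) H (W.delta W.one)

/-- The source map `Π^R`, `Π^R(h) = 1₍₁₎ ε(h 1₍₂₎)`. -/
def piR : H →ₗ[k] H :=
  (TensorProduct.rid k H).toLinearMap ∘ₗ lTensor H W.epsmu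
    ∘ₗ lTensor H (TensorProduct.comm k H H).toLinearMap
    ∘ₗ (TensorProduct.assoc k H H H).toLinearMap
    ∘ₗ TensorProduct.mk k (H ⊗[k] H) H (W.delta W.one)

/-- `Π̄^L(h) = 1₍₁₎ ε(1₍₂₎ h)`. -/
def pibarL : H →ₗ[k] H :=
  (TensorProduct.rid k H).toLinearMap ∘ₗ lTensor H W.epsmu
    ∘ₗ (TensorProduct.assoc k H H H).toLinearMap
    ∘ₗ TensorProduct.mk k (H ⊗[k] H) H (W.delta W.one)

/-- `Π̄^R(h) = ε(h 1₍₁₎) 1₍₂₎`. -/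
def pibarR : H →ₗ[k] H :=
  (TensorProduct.lid k H).toLinearMap ∘ₗ rTensor H W.epsmu
    ∘ₗ (TensorProduct.assoc k H H H).symm.toLinearMap
    ∘ₗ (TensorProduct.comm k (H ⊗[k] H) H).toLinearMap
    ∘ₗ TensorProduct.mk k (H ⊗[k] H) H (W.delta W.one)

end WeakBialgebraStr

/-- A weak Hopf algebra structure: a weak bialgebra with an antipode. -/
structure WeakHopfStr (k : Type) [CommRing k] (H : Type) [AddCommGroup H] [Module k H]
    extends WeakBialgebraStr k H where
  lam : H →ₗ[k] H
  antipode_r : toWeakBialgebraStr.mu ∘ₗ TensorProduct.map LinearMap.id lam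
      ∘ₗ toWeakBialgebraStr.delta = toWeakBialgebraStr.piL
  antipode_l : toWeakBialgebraStr.mu ∘ₗ TensorProduct.map lam LinearMap.id
      ∘ₗ toWeakBialgebraStr.delta = toWeakBialgebraStr.piR
  antipode_inner : toWeakBialgebraStr.mu ∘ₗ TensorProduct.map lam
      (toWeakBialgebraStr.mu ∘ₗ TensorProduct.map LinearMap.id lam
        ∘ₗ toWeakBialgebraStr.delta)
      ∘ₗ toWeakBialgebraStr.delta = lam

/-- Convolution product of two linear maps from a "coalgebra" `(X, D)` into an algebra `B`. -/
def convOn {B : Type} [Ring B] [Algebra k B] {X : Type} [AddCommGroup X] [Module k X]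
    (D : X →ₗ[k] X ⊗[k] X) (f g : X →ₗ[k] B) : X →ₗ[k] B :=
  LinearMap.mul' k B ∘ₗ TensorProduct.map f g ∘ₗ D

/-- Tensor product comultiplication. -/
def deltaT {X Y : Type} [AddCommGroup X] [Module k X] [AddCommGroup Y] [Module k Y]
    (dX : X →ₗ[k] X ⊗[k] X) (dY : Y →ₗ[k] Y ⊗[k] Y) :
    X ⊗[k] Y →ₗ[k] (X ⊗[k] Y) ⊗[k] (X ⊗[k] Y) :=
  (tensorTensorTensorComm k X X Y Y).toLinearMap ∘ₗ TensorProduct.map dX dY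

/-- Comultiplication of `H ⊗ H`. -/
def delta2 (W : WeakBialgebraStr k H) :
    H ⊗[k] H →ₗ[k] (H ⊗[k] H) ⊗[k] (H ⊗[k] H) := deltaT W.delta W.delta

/-- Comultiplication of `H ⊗ (H ⊗ H)`. -/
def delta3 (W : WeakBialgebraStr k H) :
    H ⊗[k] (H ⊗[k] H) →ₗ[k]
      (H ⊗[k] (H ⊗[k] H)) ⊗[k] (H ⊗[k] (H ⊗[k] H)) :=
  deltaT W.delta (delta2 W)

/-- Comultiplication of `H ⊗ (H ⊗ (H ⊗ H))`. -/
def delta4 (W : WeakBialgebraStr k H) :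
    H ⊗[k] (H ⊗[k] (H ⊗[k] H)) →ₗ[k]
      (H ⊗[k] (H ⊗[k] (H ⊗[k] H))) ⊗[k] (H ⊗[k] (H ⊗[k] (H ⊗[k] H))) :=
  deltaT W.delta (delta3 W)

/-- Cocommutativity of the coproduct. -/
def Cocomm (W : WeakBialgebraStr k H) : Prop :=
  ∀ x : H, TensorProduct.comm k H H (W.delta x) = W.delta x

variable {B : Type} [Ring B] [Algebra k B]

/-- A measuring of `H` on `B`. -/
def IsMeasuring (W : WeakBialgebraStr k H) (φ : H ⊗[k] B →ₗ[k] B) : Prop :=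
  ∀ (h : H) (b b' : B), φ (h ⊗ₜ[k] (b * b')) =
    LinearMap.mul' k B (TensorProduct.map φ φ
      (tensorTensorTensorComm k H H B B (W.delta h ⊗ₜ[k] (b ⊗ₜ[k] b'))))

/-- `u₁ = φ ∘ (H ⊗ η_B)`. -/
def u1 (φ : H ⊗[k] B →ₗ[k] B) : H →ₗ[k] B := φ ∘ₗ (TensorProduct.mk k H B).flip 1

/-- `u₂ = φ ∘ (μ_H ⊗ η_B)`. -/
def u2 (W : WeakBialgebraStr k H) (φ : H ⊗[k] B →ₗ[k] B) : H ⊗[k] H →ₗ[k] B :=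
  u1 φ ∘ₗ W.mu

/-- Left weak `H`-module algebra. -/
def IsWMA (W : WeakBialgebraStr k H) (φ : H ⊗[k] B →ₗ[k] B) : Prop :=
  IsMeasuring W φ ∧ (∀ b : B, φ (W.one ⊗ₜ[k] b) = b) ∧
    (∀ x y : H, u1 φ (W.mu (x ⊗ₜ[k] y)) = φ (x ⊗ₜ[k] u1 φ y))

/-- Left `H`-module algebra. -/
def IsMA (W : WeakBialgebraStr k H) (φ : H ⊗[k] B →ₗ[k] B) : Prop :=
  IsMeasuring W φ ∧ (∀ b : B, φ (W.one ⊗ₜ[k] b) = b) ∧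
    (∀ (x y : H) (b : B), φ (W.mu (x ⊗ₜ[k] y) ⊗ₜ[k] b) = φ (x ⊗ₜ[k] φ (y ⊗ₜ[k] b)))

/-- `P_{φ} = (φ ⊗ H) ∘ (H ⊗ c) ∘ (δ ⊗ B)`. -/
def Pmap (W : WeakBialgebraStr k H) (φ : H ⊗[k] B →ₗ[k] B) : H ⊗[k] B →ₗ[k] B ⊗[k] H :=
  rTensor H φ ∘ₗ (TensorProduct.assoc k H B H).symm.toLinearMap
    ∘ₗ lTensor H (TensorProduct.comm k H B).toLinearMap
    ∘ₗ (TensorProduct.assoc k H H B).toLinearMap ∘ₗ rTensor B W.delta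

/-- `F_σ = (σ ⊗ μ_H) ∘ δ_{H⊗H}`. -/
def Fmap (W : WeakBialgebraStr k H) (σ : H ⊗[k] H →ₗ[k] B) : H ⊗[k] H →ₗ[k] B ⊗[k] H :=
  TensorProduct.map σ W.mu ∘ₗ delta2 W

/-- `G_σ = (μ_H ⊗ σ) ∘ δ_{H⊗H}`. -/
def Gmap (W : WeakBialgebraStr k H) (σ : H ⊗[k] H →ₗ[k] B) : H ⊗[k] H →ₗ[k] H ⊗[k] B :=
  TensorProduct.map W.mu σ ∘ₗ delta2 W

/-- `∇_{B⊗H} = (μ_B ⊗ H) ∘ (B ⊗ ((u₁ ⊗ H) ∘ δ_H))`. -/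
def nabla (W : WeakBialgebraStr k H) (φ : H ⊗[k] B →ₗ[k] B) : B ⊗[k] H →ₗ[k] B ⊗[k] H :=
  rTensor H (LinearMap.mul' k B) ∘ₗ (TensorProduct.assoc k B B H).symm.toLinearMap
    ∘ₗ lTensor B (rTensor H (u1 φ) ∘ₗ W.delta)

/-- The twisted condition for `σ`. -/
def IsTwisted (W : WeakBialgebraStr k H) (φ : H ⊗[k] B →ₗ[k] B)
    (σ : H ⊗[k] H →ₗ[k] B) : Prop :=
  LinearMap.mul' k B ∘ₗ lTensor B σ ∘ₗ (TensorProduct.assoc k B H H).toLinearMap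
      ∘ₗ rTensor H (Pmap W φ) ∘ₗ (TensorProduct.assoc k H B H).symm.toLinearMap
      ∘ₗ lTensor H (Pmap W φ)
  = LinearMap.mul' k B ∘ₗ lTensor B φ ∘ₗ (TensorProduct.assoc k B H B).toLinearMap
      ∘ₗ rTensor B (Fmap W σ) ∘ₗ (TensorProduct.assoc k H H B).symm.toLinearMap

/-- The 2-cocycle condition for `σ`. -/
def IsCocycle (W : WeakBialgebraStr k H) (φ : H ⊗[k] B →ₗ[k] B)
    (σ : H ⊗[k] H →ₗ[k] B) : Prop :=
  LinearMap.mul' k B ∘ₗ lTensor B σ ∘ₗ (TensorProduct.assoc k B H H).toLinearMap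
      ∘ₗ rTensor H (Pmap W φ) ∘ₗ (TensorProduct.assoc k H B H).symm.toLinearMap
      ∘ₗ lTensor H (Fmap W σ)
  = LinearMap.mul' k B ∘ₗ lTensor B σ ∘ₗ (TensorProduct.assoc k B H H).toLinearMap
      ∘ₗ rTensor H (Fmap W σ) ∘ₗ (TensorProduct.assoc k H H H).symm.toLinearMap

/-- The Hom-product `φ ∧ ψ = φ ∘ (X ⊗ ψ) ∘ (D ⊗ B)`. -/
def wedgeOn {X : Type} [AddCommGroup X] [Module k X]
    (D : X →ₗ[k] X ⊗[k] X) (f g : X ⊗[k] B →ₗ[k] B) : X ⊗[k] B →ₗ[k] B :=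
  f ∘ₗ lTensor X g ∘ₗ (TensorProduct.assoc k X X B).toLinearMap ∘ₗ rTensor B D

/-- `ω̄ = μ_B ∘ (ω ⊗ B)`. -/
def wbar {X : Type} [AddCommGroup X] [Module k X] (ω : X →ₗ[k] B) : X ⊗[k] B →ₗ[k] B :=
  LinearMap.mul' k B ∘ₗ rTensor B ω

/-- `ω̄^{op} = μ_B ∘ c ∘ (ω ⊗ B)`. -/
def wbarOp {X : Type} [AddCommGroup X] [Module k X] (ω : X →ₗ[k] B) : X ⊗[k] B →ₗ[k] B :=
  LinearMap.mul' k B ∘ₗ (TensorProduct.comm k B B).toLinearMap ∘ₗ rTensor B ω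

/-- `(ω, ωi)` is a regular pair with unit `u`. -/
def RegPair {X : Type} [AddCommGroup X] [Module k X]
    (D : X →ₗ[k] X ⊗[k] X) (u ω ωi : X →ₗ[k] B) : Prop :=
  convOn D ω ωi = u ∧ convOn D ωi ω = u ∧
    convOn D (convOn D ω ωi) ω = ω ∧ convOn D (convOn D ωi ω) ωi = ωi

/-- Coface `∂_{2,0}`. -/
def cf20 (φ : H ⊗[k] B →ₗ[k] B) (σ : H ⊗[k] H →ₗ[k] B) :
    H ⊗[k] (H ⊗[k] H) →ₗ[k] B := φ ∘ₗ lTensor H σ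

/-- Coface `∂_{2,1}`. -/
def cf21 (W : WeakBialgebraStr k H) (σ : H ⊗[k] H →ₗ[k] B) :
    H ⊗[k] (H ⊗[k] H) →ₗ[k] B :=
  σ ∘ₗ rTensor H W.mu ∘ₗ (TensorProduct.assoc k H H H).symm.toLinearMap

/-- Coface `∂_{2,2}`. -/
def cf22 (W : WeakBialgebraStr k H) (σ : H ⊗[k] H →ₗ[k] B) :
    H ⊗[k] (H ⊗[k] H) →ₗ[k] B := σ ∘ₗ lTensor H W.mu

/-- Coface `∂_{2,3}`. -/
def cf23 (W : WeakBialgebraStr k H) (σ : H ⊗[k] H →ₗ[k] B) :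
    H ⊗[k] (H ⊗[k] H) →ₗ[k] B :=
  σ ∘ₗ lTensor H (W.mu ∘ₗ lTensor H W.piL)

/-- Coface `∂_{3,0}`. -/
def cf30 (φ : H ⊗[k] B →ₗ[k] B) (f : H ⊗[k] (H ⊗[k] H) →ₗ[k] B) :
    H ⊗[k] (H ⊗[k] (H ⊗[k] H)) →ₗ[k] B := φ ∘ₗ lTensor H f

/-- Coface `∂_{3,1}`. -/
def cf31 (W : WeakBialgebraStr k H) (f : H ⊗[k] (H ⊗[k] H) →ₗ[k] B) :
    H ⊗[k] (H ⊗[k] (H ⊗[k] H)) →ₗ[k] B :=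
  f ∘ₗ rTensor (H ⊗[k] H) W.mu ∘ₗ (TensorProduct.assoc k H H (H ⊗[k] H)).symm.toLinearMap

/-- Coface `∂_{3,2}`. -/
def cf32 (W : WeakBialgebraStr k H) (f : H ⊗[k] (H ⊗[k] H) →ₗ[k] B) :
    H ⊗[k] (H ⊗[k] (H ⊗[k] H)) →ₗ[k] B :=
  f ∘ₗ lTensor H (rTensor H W.mu ∘ₗ (TensorProduct.assoc k H H H).symm.toLinearMap)

/-- Coface `∂_{3,3}`. -/
def cf33 (W : WeakBialgebraStr k H) (f : H ⊗[k] (H ⊗[k] H) →ₗ[k] B) :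
    H ⊗[k] (H ⊗[k] (H ⊗[k] H)) →ₗ[k] B :=
  f ∘ₗ lTensor H (lTensor H W.mu)

/-- Coface `∂_{3,4}`. -/
def cf34 (W : WeakBialgebraStr k H) (f : H ⊗[k] (H ⊗[k] H) →ₗ[k] B) :
    H ⊗[k] (H ⊗[k] (H ⊗[k] H)) →ₗ[k] B :=
  f ∘ₗ lTensor H (lTensor H (W.mu ∘ₗ lTensor H W.piL))

/-- The pre-obstruction `ω_σ = ∂₂₀(σ) ∗ ∂₂₂(σ) ∗ ∂₂₁(σ⁻¹) ∗ ∂₂₃(σ⁻¹)`. -/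
def preObs (W : WeakBialgebraStr k H) (φ : H ⊗[k] B →ₗ[k] B)
    (σ σi : H ⊗[k] H →ₗ[k] B) : H ⊗[k] (H ⊗[k] H) →ₗ[k] B :=
  convOn (delta3 W)
    (convOn (delta3 W) (convOn (delta3 W) (cf20 φ σ) (cf22 W σ)) (cf21 W σi))
    (cf23 W σi)

/-- Bundled `k`-modules (to form iterated tensor powers). -/
structure ModB (k : Type) [CommRing k] : Type 1 where
  carrier : Type
  [acg : AddCommGroup carrier]
  [mod : Module k carrier]

attribute [instance] ModB.acg ModB.mod

/-- Tensor powers `H^{⊗(n+1)}`. -/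
def HpowM (k : Type) [CommRing k] (H : Type) [AddCommGroup H] [Module k H] : ℕ → ModB k
  | 0 => ⟨H⟩
  | n + 1 => ⟨H ⊗[k] (HpowM k H n).carrier⟩

/-- Comultiplication of `H^{⊗(n+1)}`. -/
def deltaPow (W : WeakBialgebraStr k H) : (n : ℕ) →
    ((HpowM k H n).carrier →ₗ[k] (HpowM k H n).carrier ⊗[k] (HpowM k H n).carrier)
  | 0 => W.delta
  | n + 1 => deltaT W.delta (deltaPow W n)

/-- Iterated multiplication `m : H^{⊗(n+1)} → H`. -/
def mPow (W : WeakBialgebraStr k H) : (n : ℕ) → ((HpowM k H n).carrier →ₗ[k] H)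
  | 0 => LinearMap.id
  | n + 1 => W.mu ∘ₗ lTensor H (mPow W n)

/-- Iterated action `φ^{⊗(n+1)} : H^{⊗(n+1)} ⊗ B → B`. -/
def phiPow (φ : H ⊗[k] B →ₗ[k] B) : (n : ℕ) →
    ((HpowM k H n).carrier ⊗[k] B →ₗ[k] B)
  | 0 => φ
  | n + 1 => φ ∘ₗ lTensor H (phiPow φ n)
      ∘ₗ (TensorProduct.assoc k H (HpowM k H n).carrier B).toLinearMap

/-- `u_{n+1} = u₁ ∘ m^{⊗(n+1)}`. -/
def uPow (W : WeakBialgebraStr k H) (φ : H ⊗[k] B →ₗ[k] B) (n : ℕ) :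
    (HpowM k H n).carrier →ₗ[k] B := u1 φ ∘ₗ mPow W n

end WK
open WK in
theorem statement12 {k : Type} [CommRing k] {H : Type} [AddCommGroup H] [Module k H]
    {B : Type} [Ring B] [Algebra k B]
    (W : WeakHopfStr k H) (hco : Cocomm W.toWeakBialgebraStr)
    (φ : H ⊗[k] B →ₗ[k] B) (hφ : IsWMA W.toWeakBialgebraStr φ)
    (hinv : ∃ φd : H ⊗[k] B →ₗ[k] B,
      wedgeOn W.toWeakBialgebraStr.delta φ φd = wbar (u1 φ)) :
    ∀ n : ℕ, ∃ φdn : (HpowM k H n).carrier ⊗[k] B →ₗ[k] B,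
      wedgeOn (deltaPow W.toWeakBialgebraStr n) (phiPow φ n) φdn
        = wbar (uPow W.toWeakBialgebraStr φ n) := by
  classical
  obtain ⟨φd, hφd⟩ := hinv
  set WB := W.toWeakBialgebraStr with hWB
  intro n
  induction n with
  | zero =>
    refine ⟨φd, ?_⟩
    exact hφd
  | succ n ih =>
    obtain ⟨φdn, hdn⟩ := ih
    set Y := (HpowM k H n).carrier with hY
    set D := deltaPow WB n with hD
    set φn := phiPow φ n with hφn
    refine ⟨φdn ∘ₗ lTensor Y φd ∘ₗ (TensorProduct.assoc k Y H B).toLinearMap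
      ∘ₗ rTensor B (TensorProduct.comm k H Y).toLinearMap, ?_⟩
    apply TensorProduct.ext_threefold
    intro h y b
    set ψ : (H ⊗[k] Y) ⊗[k] B →ₗ[k] B :=
      φdn ∘ₗ lTensor Y φd ∘ₗ (TensorProduct.assoc k Y H B).toLinearMap
        ∘ₗ rTensor B (TensorProduct.comm k H Y).toLinearMap with hψ
    set d : H →ₗ[k] B := φd ∘ₗ (TensorProduct.mk k H B).flip b with hd
    set e : B := uPow WB φ n y with he
    -- Step A: unfold the wedge on pure tensors, reducing to linear data in δh, Dy
    have hA : ∀ (t : H ⊗[k] H) (s : Y ⊗[k] Y),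
        (phiPow φ (n+1)) ((lTensor (H ⊗[k] Y) ψ)
          ((TensorProduct.assoc k (H ⊗[k] Y) (H ⊗[k] Y) B)
            ((tensorTensorTensorComm k H H Y Y (t ⊗ₜ[k] s)) ⊗ₜ[k] b)))
        = φ ((lTensor H ((φn ∘ₗ lTensor Y φdn ∘ₗ (TensorProduct.assoc k Y Y B).toLinearMap
            ∘ₗ TensorProduct.mk k (Y ⊗[k] Y) B s) ∘ₗ d)) t) := by
      intro t s
      have hzero : phiPow φ (n+1) (0 : (H ⊗[k] Y) ⊗[k] B) = 0 := map_zero _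
      have hadd : ∀ x x' : (H ⊗[k] Y) ⊗[k] B,
          phiPow φ (n+1) (x + x') = phiPow φ (n+1) x + phiPow φ (n+1) x' :=
        fun x x' => map_add _ x x'
      induction t with
      | zero => simp [hzero]
      | tmul a c =>
        induction s with
        | zero => simp [hzero]
        | tmul p q =>
          simp only [phiPow, hψ, hd]
          rfl
        | add s₁ s₂ ih1 ih2 =>
          simp only [tmul_add, map_add, add_tmul, hadd, ih1, ih2, LinearMap.add_apply,
            TensorProduct.mk_apply, LinearMap.comp_apply]
          simp [TensorProduct.mk_apply, tmul_add]
      | add t₁ t₂ ih1 ih2 =>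
        simp only [add_tmul, map_add, hadd, ih1, ih2]
    -- the inner map equals left multiplication by e (induction hypothesis)
    have hg : φn ∘ₗ lTensor Y φdn ∘ₗ (TensorProduct.assoc k Y Y B).toLinearMap
        ∘ₗ TensorProduct.mk k (Y ⊗[k] Y) B (D y)
        = LinearMap.mul' k B ∘ₗ TensorProduct.mk k B B e := by
      apply LinearMap.ext
      intro c
      have h1 := LinearMap.congr_fun hdn (y ⊗ₜ[k] c)
      simpa [wedgeOn, wbar, he, mul'_apply] using h1
    -- Step B : measuring
    have hB : (φ ∘ₗ lTensor H ((LinearMap.mul' k B ∘ₗ TensorProduct.mk k B B e) ∘ₗ d))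
        = (LinearMap.mul' k B ∘ₗ TensorProduct.map φ φ
            ∘ₗ (tensorTensorTensorComm k H H B B).toLinearMap
            ∘ₗ lTensor (H ⊗[k] H) ((TensorProduct.mk k B B e) ∘ₗ d))
          ∘ₗ rTensor H WB.delta := by
      apply TensorProduct.ext'
      intro a c
      simpa [mul'_apply] using hφ.1 a e (d c)
    -- Step D : expand the inner comultiplication leg
    have hDstep : ∀ (h₁ : H) (t : H ⊗[k] H),
        (LinearMap.mul' k B ∘ₗ TensorProduct.map φ φ
            ∘ₗ (tensorTensorTensorComm k H H B B).toLinearMap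
            ∘ₗ lTensor (H ⊗[k] H) ((TensorProduct.mk k B B e) ∘ₗ d))
          ((TensorProduct.assoc k H H H).symm (h₁ ⊗ₜ[k] t))
        = φ (h₁ ⊗ₜ[k] e) *
            φ ((lTensor H φd) ((TensorProduct.assoc k H H B) (t ⊗ₜ[k] b))) := by
      intro h₁ t
      induction t with
      | zero => simp
      | tmul g₁ g₂ => simp [mul'_apply, hd]
      | add t₁ t₂ ih1 ih2 =>
        simp only [tmul_add, map_add, add_tmul, ih1, ih2, mul_add]
    -- Step F : collapse  Σ φ(h₁⊗e) u₁(h₂)  to  φ(h⊗e)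
    have hF : ∀ t : H ⊗[k] H,
        (LinearMap.mul' k B) (TensorProduct.map (φ ∘ₗ (TensorProduct.mk k H B).flip e)
          (u1 φ) t)
        = (LinearMap.mul' k B) (TensorProduct.map φ φ
            ((tensorTensorTensorComm k H H B B) (t ⊗ₜ[k] (e ⊗ₜ[k] (1 : B))))) := by
      intro t
      induction t with
      | zero => simp
      | tmul a c => simp [mul'_apply, u1]
      | add t₁ t₂ ih1 ih2 => simp only [map_add, add_tmul, ih1, ih2]
    -- now assemble everything
    have lhs1 : wedgeOn (deltaPow WB (n+1)) (phiPow φ (n+1)) ψ ((h ⊗ₜ[k] y) ⊗ₜ[k] b)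
        = φ ((lTensor H ((φn ∘ₗ lTensor Y φdn ∘ₗ (TensorProduct.assoc k Y Y B).toLinearMap
            ∘ₗ TensorProduct.mk k (Y ⊗[k] Y) B (D y)) ∘ₗ d)) (WB.delta h)) := by
      have : wedgeOn (deltaPow WB (n+1)) (phiPow φ (n+1)) ψ ((h ⊗ₜ[k] y) ⊗ₜ[k] b)
          = (phiPow φ (n+1)) ((lTensor (H ⊗[k] Y) ψ)
            ((TensorProduct.assoc k (H ⊗[k] Y) (H ⊗[k] Y) B)
              ((tensorTensorTensorComm k H H Y Y ((WB.delta h) ⊗ₜ[k] (D y))) ⊗ₜ[k] b))) := by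
        rfl
      rw [this, hA]
    have lhs2 : φ ((lTensor H ((LinearMap.mul' k B ∘ₗ TensorProduct.mk k B B e) ∘ₗ d))
          (WB.delta h))
        = (LinearMap.mul' k B ∘ₗ TensorProduct.map φ φ
            ∘ₗ (tensorTensorTensorComm k H H B B).toLinearMap
            ∘ₗ lTensor (H ⊗[k] H) ((TensorProduct.mk k B B e) ∘ₗ d))
          ((rTensor H WB.delta) (WB.delta h)) :=
      LinearMap.congr_fun hB (WB.delta h)
    -- expand lTensor δ (δ h) and use hDstep
    have lhs3 : ∀ u : H ⊗[k] H,
        (LinearMap.mul' k B ∘ₗ TensorProduct.map φ φ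
            ∘ₗ (tensorTensorTensorComm k H H B B).toLinearMap
            ∘ₗ lTensor (H ⊗[k] H) ((TensorProduct.mk k B B e) ∘ₗ d))
          ((TensorProduct.assoc k H H H).symm ((lTensor H WB.delta) u))
        = (LinearMap.mul' k B) (TensorProduct.map (φ ∘ₗ (TensorProduct.mk k H B).flip e)
            (u1 φ) u) * b := by
      intro u
      induction u with
      | zero => simp
      | tmul h₁ h₂ =>
        rw [lTensor_tmul, hDstep h₁ (WB.delta h₂)]
        have h2 : φ ((lTensor H φd) ((TensorProduct.assoc k H H B)
            ((WB.delta h₂) ⊗ₜ[k] b))) = wedgeOn WB.delta φ φd (h₂ ⊗ₜ[k] b) := by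
          simp [wedgeOn]
        rw [h2, hφd]
        simp [wbar, mul'_apply, mul_assoc]
      | add u₁ u₂ ih1 ih2 =>
        simp only [map_add, ih1, ih2, add_mul]
    have hmeas := hφ.1 h e (1 : B)
    have lhsAll : φ ((lTensor H ((φn ∘ₗ lTensor Y φdn
          ∘ₗ (TensorProduct.assoc k Y Y B).toLinearMap
          ∘ₗ TensorProduct.mk k (Y ⊗[k] Y) B (D y)) ∘ₗ d)) (WB.delta h))
        = φ (h ⊗ₜ[k] e) * b := by
      rw [hg, lhs2, WB.coassoc h, lhs3 (WB.delta h), hF, ← hmeas, mul_one]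
    -- finally compute the right-hand side
    have hrhs : wbar (uPow WB φ (n+1)) ((h ⊗ₜ[k] y) ⊗ₜ[k] b)
        = φ (h ⊗ₜ[k] e) * b := by
      have h3 : uPow WB φ (n+1) ((h ⊗ₜ[k] y) : (HpowM k H (n+1)).carrier)
          = u1 φ (WB.mu (h ⊗ₜ[k] (mPow WB n y))) := rfl
      have h4 : u1 φ (WB.mu (h ⊗ₜ[k] (mPow WB n y))) = φ (h ⊗ₜ[k] u1 φ (mPow WB n y)) :=
        hφ.2.2 h (mPow WB n y)
      have h5 : u1 φ (mPow WB n y) = e := by simp [he, uPow]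
      have h6 : wbar (uPow WB φ (n+1)) ((h ⊗ₜ[k] y) ⊗ₜ[k] b)
          = uPow WB φ (n+1) ((h ⊗ₜ[k] y) : (HpowM k H (n+1)).carrier) * b := rfl
      rw [h6, h3, h4, h5]
    exact lhs1.trans (lhsAll.trans hrhs.symm)
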